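/- Let (X, ‖·‖, ≼) be a regular partially ordered Banach space whose partial order is induced by a closed convex cone K. Suppose F : K → K is an ≼-decreasing mapping satisfying condition (H¹), and F is demi-continuous. Then F has a unique fixed point x* in K, this fixed point satisfies x* ≼ F(0), and for every point z ∈ K the iterates Fⁿ z converge in norm to x* as n → ∞. (Theorem 5.2, case (b)) -/

import Mathlib

/-- The partial order on a Banach space induced by a cone `K`: `x ≼ y` iff `y - x ∈ K`. -/
def coneLe {X : Type*} [NormedAddCommGroup X] (K : Set X) (x y : X) : Prop := y - x ∈ K

open Filter

section Aux

variable {X : Type*} [NormedAddCommGroup X] [NormedSpace ℝ X] [CompleteSpace X]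
variable (K : Set X)

/-- A sum of a summable family of elements of the closed cone lies in the cone. -/
lemma cone_tsum_mem (hKclosed : IsClosed K) (hK0 : (0 : X) ∈ K)
    (hKadd : ∀ x ∈ K, ∀ y ∈ K, x + y ∈ K)
    (f : ℕ → X) (hf : ∀ n, f n ∈ K) (hsum : Summable f) : ∑' n, f n ∈ K := by
  have hfin : ∀ s : Finset ℕ, ∑ i ∈ s, f i ∈ K := fun s =>
    Finset.sum_induction f (· ∈ K) (fun a b ha hb => hKadd a ha b hb) hK0 (fun i _ => hf i)
  exact hKclosed.mem_of_tendsto hsum.hasSum (Filter.Eventually.of_forall hfin)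

/-- Sequential normality of a regular cone: if `0 ≼ xₙ ≼ yₙ` and `yₙ → 0` then `xₙ → 0`. -/
lemma cone_normal (hKclosed : IsClosed K) (hK0 : (0 : X) ∈ K)
    (hKadd : ∀ x ∈ K, ∀ y ∈ K, x + y ∈ K)
    (hKsmul : ∀ c : ℝ, 0 ≤ c → ∀ x ∈ K, c • x ∈ K)
    (hreg : ∀ u : ℕ → X, (∀ n, coneLe K (u n) (u (n + 1))) →
      (∃ b, ∀ n, coneLe K (u n) b) → ∃ p, Filter.Tendsto u Filter.atTop (nhds p))
    (x y : ℕ → X) (hx : ∀ n, x n ∈ K) (hxy : ∀ n, y n - x n ∈ K)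
    (hy : Tendsto y atTop (nhds 0)) : Tendsto x atTop (nhds 0) := by
  by_contra hcon
  rw [Metric.tendsto_atTop] at hcon
  push_neg at hcon
  obtain ⟨ε, hε, hfreq⟩ := hcon
  -- choose indices n j with ‖x (n j)‖ ≥ ε and ‖y (n j)‖ ≤ ε * (1/2)^j
  have hchoice : ∀ j : ℕ, ∃ n : ℕ, ε ≤ ‖x n‖ ∧ ‖y n‖ ≤ ε * (1/2 : ℝ) ^ j := by
    intro j
    have hpos : 0 < ε * (1/2 : ℝ) ^ j := by positivity
    have := Metric.tendsto_atTop.mp hy (ε * (1/2 : ℝ) ^ j) hpos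
    obtain ⟨N, hN⟩ := this
    obtain ⟨n, hnN, hn⟩ := hfreq N
    refine ⟨n, ?_, ?_⟩
    · simpa [dist_eq_norm] using hn
    · have := hN n hnN
      simp only [dist_eq_norm, sub_zero] at this
      exact this.le
  choose n hn1 hn2 using hchoice
  have hxpos : ∀ j, (0:ℝ) < ‖x (n j)‖ := fun j => lt_of_lt_of_le hε (hn1 j)
  set Xs : ℕ → X := fun j => (‖x (n j)‖)⁻¹ • x (n j) with hXs
  set Ys : ℕ → X := fun j => (‖x (n j)‖)⁻¹ • y (n j) with hYs
  have hXnorm : ∀ j, ‖Xs j‖ = 1 := by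
    intro j
    rw [hXs]
    simp only [norm_smul, norm_inv, norm_norm]
    exact inv_mul_cancel₀ (hxpos j).ne'
  have hXmem : ∀ j, Xs j ∈ K := fun j =>
    hKsmul _ (inv_nonneg.mpr (norm_nonneg _)) _ (hx (n j))
  have hYXmem : ∀ j, Ys j - Xs j ∈ K := by
    intro j
    have : Ys j - Xs j = (‖x (n j)‖)⁻¹ • (y (n j) - x (n j)) := by
      rw [hYs, hXs]; simp [smul_sub]
    rw [this]
    exact hKsmul _ (inv_nonneg.mpr (norm_nonneg _)) _ (hxy (n j))
  have hYmem : ∀ j, Ys j ∈ K := by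
    intro j
    have : Ys j = Xs j + (Ys j - Xs j) := by abel
    rw [this]
    exact hKadd _ (hXmem j) _ (hYXmem j)
  have hYnorm : ∀ j, ‖Ys j‖ ≤ (1/2 : ℝ) ^ j := by
    intro j
    rw [hYs]
    simp only [norm_smul, norm_inv, norm_norm]
    calc (‖x (n j)‖)⁻¹ * ‖y (n j)‖ ≤ (‖x (n j)‖)⁻¹ * (ε * (1/2:ℝ)^j) := by
          exact mul_le_mul_of_nonneg_left (hn2 j) (inv_nonneg.mpr (norm_nonneg _))
      _ ≤ ε⁻¹ * (ε * (1/2:ℝ)^j) := by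
          apply mul_le_mul_of_nonneg_right _ (by positivity)
          exact inv_anti₀ hε (hn1 j)
      _ = (1/2:ℝ)^j := by field_simp
  have hYsum : Summable Ys := Summable.of_norm_bounded summable_geometric_two hYnorm
  set T : X := ∑' j, Ys j with hT
  set S : ℕ → X := fun m => ∑ i ∈ Finset.range (m+1), Xs i with hS
  have hSinc : ∀ m, coneLe K (S m) (S (m+1)) := by
    intro m
    have : S (m+1) - S m = Xs (m+1) := by
      rw [hS]; simp [Finset.sum_range_succ]
    unfold coneLe
    rw [this]
    exact hXmem (m+1)
  have hSbd : ∀ m, coneLe K (S m) T := by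
    intro m
    unfold coneLe
    have htail : T - ∑ i ∈ Finset.range (m+1), Ys i = ∑' i, Ys (i + (m+1)) := by
      rw [hT, ← Summable.sum_add_tsum_nat_add (m+1) hYsum]; abel
    have h1 : T - S m = (∑' i, Ys (i + (m+1))) + ∑ i ∈ Finset.range (m+1), (Ys i - Xs i) := by
      rw [← htail, hS, Finset.sum_sub_distrib]; abel
    rw [h1]
    refine hKadd _ ?_ _ ?_
    · exact cone_tsum_mem K hKclosed hK0 hKadd _ (fun i => hYmem _)
        ((summable_nat_add_iff (m+1)).mpr hYsum)
    · exact Finset.sum_induction _ (· ∈ K) (fun a b ha hb => hKadd a ha b hb) hK0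
        (fun i _ => hYXmem i)
  obtain ⟨p, hp⟩ := hreg S hSinc ⟨T, hSbd⟩
  have hdiff : Tendsto (fun m => S (m+1) - S m) atTop (nhds 0) := by
    have := (hp.comp (tendsto_add_atTop_nat 1)).sub hp
    simpa using this
  have : Tendsto (fun m => ‖S (m+1) - S m‖) atTop (nhds 0) := by
    simpa using hdiff.norm
  have hone : (fun m => ‖S (m+1) - S m‖) = fun _ => (1:ℝ) := by
    funext m
    have : S (m+1) - S m = Xs (m+1) := by
      rw [hS]; simp [Finset.sum_range_succ]
    rw [this, hXnorm]
  rw [hone] at this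
  have := tendsto_nhds_unique this tendsto_const_nhds
  norm_num at this

/-- Order squeeze: if `uₙ ≼ cₙ ≼ vₙ` and `uₙ, vₙ → L` then `cₙ → L`. -/
lemma cone_squeeze (hKclosed : IsClosed K) (hK0 : (0 : X) ∈ K)
    (hKadd : ∀ x ∈ K, ∀ y ∈ K, x + y ∈ K)
    (hKsmul : ∀ c : ℝ, 0 ≤ c → ∀ x ∈ K, c • x ∈ K)
    (hreg : ∀ u : ℕ → X, (∀ n, coneLe K (u n) (u (n + 1))) →
      (∃ b, ∀ n, coneLe K (u n) b) → ∃ p, Filter.Tendsto u Filter.atTop (nhds p))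
    (u c v : ℕ → X) (h1 : ∀ n, coneLe K (u n) (c n)) (h2 : ∀ n, coneLe K (c n) (v n))
    (L : X) (hu : Tendsto u atTop (nhds L)) (hv : Tendsto v atTop (nhds L)) :
    Tendsto c atTop (nhds L) := by
  have hy0 : Tendsto (fun n => v n - u n) atTop (nhds 0) := by
    have := hv.sub hu; simpa using this
  have hx0 : Tendsto (fun n => c n - u n) atTop (nhds 0) := by
    refine cone_normal K hKclosed hK0 hKadd hKsmul hreg _ _ (fun n => h1 n) ?_ hy0
    intro n
    have : v n - u n - (c n - u n) = v n - c n := by abel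
    rw [this]
    exact h2 n
  have := hx0.add hu
  simpa using this

end Aux

/-- Theorem 5.2, case (b): in a regular partially ordered Banach space with order induced
by the closed convex cone `K`, an ≼-decreasing demi-continuous mapping `F : K → K`
satisfying condition (H¹) has a unique fixed point `x*` in `K`; moreover `x* ≼ F 0` and
for every `z ∈ K` the iterates `Fⁿ z` converge in norm to `x*`. -/
theorem decreasing_demicontinuous_unique_fixed_point_of_regular
    {X : Type*} [NormedAddCommGroup X] [NormedSpace ℝ X] [CompleteSpace X]
    (K : Set X) (hKclosed : IsClosed K) (hK0 : (0 : X) ∈ K)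
    (hKadd : ∀ x ∈ K, ∀ y ∈ K, x + y ∈ K)
    (hKsmul : ∀ c : ℝ, 0 ≤ c → ∀ x ∈ K, c • x ∈ K)
    (hKpointed : ∀ x ∈ K, -x ∈ K → x = 0)
    -- regularity: every ≼-increasing ≼-upper-bounded sequence converges in norm
    (hreg : ∀ u : ℕ → X, (∀ n, coneLe K (u n) (u (n + 1))) →
      (∃ b, ∀ n, coneLe K (u n) b) → ∃ p, Filter.Tendsto u Filter.atTop (nhds p))
    -- F maps K into K and is ≼-decreasing
    (F : X → X) (hFmaps : ∀ x ∈ K, F x ∈ K)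
    (hFdec : ∀ x ∈ K, ∀ y ∈ K, coneLe K x y → coneLe K (F y) (F x))
    -- F satisfies condition (H¹)
    (hH1 : ∀ u ∈ K, ∀ v ∈ K, F u = v → F v = u → u = v)
    -- F is demi-continuous: norm convergence is sent to weak convergence
    (hFdemi : ∀ (u : ℕ → X), (∀ n, u n ∈ K) → ∀ p ∈ K,
      Filter.Tendsto u Filter.atTop (nhds p) →
      ∀ f : X →L[ℝ] ℝ, Filter.Tendsto (fun n => f (F (u n))) Filter.atTop (nhds (f (F p)))) :
    ∃ x : X, x ∈ K ∧ F x = x ∧ coneLe K x (F 0) ∧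
      (∀ y ∈ K, F y = y → y = x) ∧
      ∀ z ∈ K, Filter.Tendsto (fun n => F^[n] z) Filter.atTop (nhds x) := by
  -- basic coneLe facts
  have htrans : ∀ {x y z : X}, coneLe K x y → coneLe K y z → coneLe K x z := by
    intro x y z h1 h2
    have := hKadd _ h2 _ h1
    unfold coneLe at *
    rwa [sub_add_sub_cancel] at this
  have hzero : ∀ {x : X}, x ∈ K → coneLe K 0 x := by
    intro x hx; unfold coneLe; rwa [sub_zero]
  have hlimLe : ∀ (u v : ℕ → X) (a b : X), (∀ n, coneLe K (u n) (v n)) →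
      Tendsto u atTop (nhds a) → Tendsto v atTop (nhds b) → coneLe K a b := by
    intro u v a b h hu hv
    exact hKclosed.mem_of_tendsto (hv.sub hu) (Eventually.of_forall h)
  -- iterates lie in K
  have hiter : ∀ (z : X), z ∈ K → ∀ n, F^[n] z ∈ K := by
    intro z hz n
    induction n with
    | zero => simpa using hz
    | succ m ih => rw [Function.iterate_succ_apply']; exact hFmaps _ ih
  -- the two monotone sequences
  set a : ℕ → X := fun n => F^[2*n] (0:X) with ha
  set b : ℕ → X := fun n => F^[2*n+1] (0:X) with hb
  have hamem : ∀ n, a n ∈ K := fun n => hiter 0 hK0 _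
  have hbmem : ∀ n, b n ∈ K := fun n => hiter 0 hK0 _
  have haFa : ∀ n, F (a n) = b n := fun n =>
    (Function.iterate_succ_apply' F (2*n) 0).symm
  have hFb : ∀ n, F (b n) = a (n+1) := by
    intro n
    have e : 2*(n+1) = (2*n+1)+1 := by ring
    rw [ha]
    simp only [e]
    exact (Function.iterate_succ_apply' F (2*n+1) 0).symm
  -- a increasing, a n ≼ b n
  have hab : ∀ n, coneLe K (a n) (a (n+1)) ∧ coneLe K (a n) (b n) := by
    intro n
    induction n with
    | zero =>
      constructor
      · have : a 0 = 0 := by rw [ha]; simp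
        rw [this]; exact hzero (hamem 1)
      · have : a 0 = 0 := by rw [ha]; simp
        rw [this]; exact hzero (hbmem 0)
    | succ m ih =>
      obtain ⟨ih1, ih2⟩ := ih
      -- a(m+1) ≼ b m
      have h3 : coneLe K (a (m+1)) (b m) := by
        have := hFdec _ (hamem m) _ (hbmem m) ih2
        rwa [haFa, hFb] at this
      constructor
      · -- a(m+1) ≼ a(m+2) from a m ≼ a(m+1) applying F twice
        have s1 := hFdec _ (hamem m) _ (hamem (m+1)) ih1
        rw [haFa, haFa] at s1
        have s2 := hFdec _ (hbmem (m+1)) _ (hbmem m) s1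
        rwa [hFb, hFb] at s2
      · -- a(m+1) ≼ b(m+1) from a(m+1) ≼ b m
        have := hFdec _ (hamem (m+1)) _ (hbmem m) h3
        rwa [haFa, hFb] at this
  have hainc : ∀ n, coneLe K (a n) (a (n+1)) := fun n => (hab n).1
  have habn : ∀ n, coneLe K (a n) (b n) := fun n => (hab n).2
  have hbdec : ∀ n, coneLe K (b (n+1)) (b n) := by
    intro n
    have := hFdec _ (hamem n) _ (hamem (n+1)) (hainc n)
    rwa [haFa, haFa] at this
  have hbb0 : ∀ n, coneLe K (b n) (b 0) := by
    intro n
    induction n with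
    | zero => unfold coneLe; simpa using hK0
    | succ m ih => exact htrans (hbdec m) ih
  have hb0 : b 0 = F 0 := by rw [hb]; simp
  have habd : ∀ n, coneLe K (a n) (F 0) := fun n => hb0 ▸ htrans (habn n) (hbb0 n)
  -- convergence of a
  obtain ⟨p, hap⟩ := hreg a hainc ⟨F 0, habd⟩
  have hpK : p ∈ K := hKclosed.mem_of_tendsto hap (Eventually.of_forall hamem)
  -- convergence of b via F 0 - b n
  have hbconv : ∃ q, Tendsto b atTop (nhds q) := by
    set u : ℕ → X := fun n => F 0 - b n with hu
    have huinc : ∀ n, coneLe K (u n) (u (n+1)) := by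
      intro n
      unfold coneLe
      have : u (n+1) - u n = b n - b (n+1) := by show F 0 - b (n+1) - (F 0 - b n) = b n - b (n+1); exact sub_sub_sub_cancel_left _ _ _
      rw [this]; exact hbdec n
    have hubd : ∀ n, coneLe K (u n) (F 0) := by
      intro n
      unfold coneLe
      have : F 0 - u n = b n := by show F 0 - (F 0 - b n) = b n; rw [sub_sub_cancel]
      rw [this]; exact hbmem n
    obtain ⟨r, hr⟩ := hreg u huinc ⟨F 0, hubd⟩
    refine ⟨F 0 - r, ?_⟩
    have : b = fun n => F 0 - u n := by
      funext n; show b n = F 0 - (F 0 - b n); rw [sub_sub_cancel]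
    rw [this]
    exact tendsto_const_nhds.sub hr
  obtain ⟨q, hbq⟩ := hbconv
  have hqK : q ∈ K := hKclosed.mem_of_tendsto hbq (Eventually.of_forall hbmem)
  -- F p = q via demi-continuity
  have hFp : F p = q := by
    rw [NormedSpace.eq_iff_forall_dual_eq (𝕜 := ℝ)]
    intro g
    have h1 := hFdemi a hamem p hpK hap g
    have h2 : Tendsto (fun n => g (F (a n))) atTop (nhds (g q)) := by
      have : (fun n => g (F (a n))) = fun n => g (b n) := by
        funext n; rw [haFa]
      rw [this]
      exact (g.continuous.tendsto q).comp hbq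
    exact tendsto_nhds_unique h1 h2
  have hFq : F q = p := by
    rw [NormedSpace.eq_iff_forall_dual_eq (𝕜 := ℝ)]
    intro g
    have h1 := hFdemi b hbmem q hqK hbq g
    have h2 : Tendsto (fun n => g (F (b n))) atTop (nhds (g p)) := by
      have : (fun n => g (F (b n))) = fun n => g (a (n+1)) := by
        funext n; rw [hFb]
      rw [this]
      exact (g.continuous.tendsto p).comp (hap.comp (tendsto_add_atTop_nat 1))
    exact tendsto_nhds_unique h1 h2
  have hpq : p = q := hH1 p hpK q hqK hFp hFq
  subst hpq
  refine ⟨p, hpK, by rw [hFp], ?_, ?_, ?_⟩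
  · -- p ≼ F 0
    exact hlimLe a (fun _ => F 0) p (F 0) habd hap tendsto_const_nhds
  · -- uniqueness
    intro y hy hFy
    have hay : ∀ n, coneLe K (a n) y := by
      intro n
      induction n with
      | zero =>
        have : a 0 = 0 := by rw [ha]; simp
        rw [this]; exact hzero hy
      | succ m ih =>
        have hyb : coneLe K y (b m) := by
          have := hFdec _ (hamem m) _ hy ih
          rwa [haFa, hFy] at this
        have := hFdec _ hy _ (hbmem m) hyb
        rwa [hFb, hFy] at this
    have hyb : ∀ n, coneLe K y (b n) := by
      intro n
      have := hFdec _ (hamem n) _ hy (hay n)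
      rwa [haFa, hFy] at this
    have h1 : coneLe K p y := hlimLe a (fun _ => y) p y hay hap tendsto_const_nhds
    have h2 : coneLe K y p := hlimLe (fun _ => y) b y p hyb tendsto_const_nhds hbq
    have := hKpointed (y - p) h1 (by unfold coneLe at h2; rwa [← neg_sub] at h2)
    exact sub_eq_zero.mp this
  · -- convergence of iterates
    intro z hz
    set c : ℕ → X := fun n => F^[n] z with hc
    have hcmem : ∀ n, c n ∈ K := fun n => hiter z hz n
    have hcsucc : ∀ n, c (n+1) = F (c n) := fun n => Function.iterate_succ_apply' F n z
    -- S k : a k ≼ c (2k+1) ≼ b k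
    have hS : ∀ k, coneLe K (a k) (c (2*k+1)) ∧ coneLe K (c (2*k+1)) (b k) := by
      intro k
      induction k with
      | zero =>
        constructor
        · have ha0 : a 0 = 0 := by rw [ha]; simp
          rw [ha0]; exact hzero (hcmem 1)
        · have hc1 : c 1 = F z := by rw [hcsucc 0]; rw [hc]; simp
          rw [hc1, hb0]
          exact hFdec 0 hK0 z hz (hzero hz)
      | succ m ih =>
        obtain ⟨ih1, ih2⟩ := ih
        have e1 : 2*(m+1)+1 = (2*m+1)+1+1 := by ring
        -- T: a(m+1) ≼ c(2m+2) ≼ b m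
        have t1 : coneLe K (c (2*m+1+1)) (b m) := by
          have := hFdec _ (hamem m) _ (hcmem (2*m+1)) ih1
          rwa [haFa, ← hcsucc] at this
        have t2 : coneLe K (a (m+1)) (c (2*m+1+1)) := by
          have := hFdec _ (hcmem (2*m+1)) _ (hbmem m) ih2
          rwa [hFb, ← hcsucc] at this
        constructor
        · rw [e1]
          have := hFdec _ (hcmem (2*m+1+1)) _ (hbmem m) t1
          rwa [hFb, ← hcsucc] at this
        · rw [e1]
          have := hFdec _ (hamem (m+1)) _ (hcmem (2*m+1+1)) t2
          rwa [haFa, ← hcsucc] at this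
    -- T k : a (k+1) ≼ c (2k+2) ≼ b k
    have hT : ∀ k, coneLe K (a (k+1)) (c (2*k+2)) ∧ coneLe K (c (2*k+2)) (b k) := by
      intro k
      obtain ⟨s1, s2⟩ := hS k
      have e : 2*k+2 = (2*k+1)+1 := by ring
      constructor
      · rw [e]
        have := hFdec _ (hcmem (2*k+1)) _ (hbmem k) s2
        rwa [hFb, ← hcsucc] at this
      · rw [e]
        have := hFdec _ (hamem k) _ (hcmem (2*k+1)) s1
        rwa [haFa, ← hcsucc] at this
    -- sandwich for m ↦ c (m+1)
    have hsand : ∀ m, coneLe K (a ((m+1)/2)) (c (m+1)) ∧ coneLe K (c (m+1)) (b (m/2)) := by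
      intro m
      rcases Nat.even_or_odd m with ⟨k, hk⟩ | ⟨k, hk⟩
      · have e1 : (m+1)/2 = k := by omega
        have e2 : m/2 = k := by omega
        have e3 : m+1 = 2*k+1 := by omega
        rw [e1, e2, e3]
        exact hS k
      · have e1 : (m+1)/2 = k+1 := by omega
        have e2 : m/2 = k := by omega
        have e3 : m+1 = 2*k+2 := by omega
        rw [e1, e2, e3]
        exact hT k
    have hdivtop : Tendsto (fun m : ℕ => (m+1)/2) atTop atTop :=
      tendsto_atTop_atTop.mpr (fun N => ⟨2*N, fun m hm => by omega⟩)
    have hdivtop2 : Tendsto (fun m : ℕ => m/2) atTop atTop :=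
      tendsto_atTop_atTop.mpr (fun N => ⟨2*N, fun m hm => by omega⟩)
    have hA : Tendsto (fun m => a ((m+1)/2)) atTop (nhds p) := hap.comp hdivtop
    have hB : Tendsto (fun m => b (m/2)) atTop (nhds p) := hbq.comp hdivtop2
    have hcshift : Tendsto (fun m => c (m+1)) atTop (nhds p) :=
      cone_squeeze K hKclosed hK0 hKadd hKsmul hreg
        (fun m => a ((m+1)/2)) (fun m => c (m+1)) (fun m => b (m/2))
        (fun m => (hsand m).1) (fun m => (hsand m).2) p hA hB
    exact (tendsto_add_atTop_iff_nat 1).mp hcshift
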